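/- Let N ≥ 1, 0 < p < 1, and take q = p² (so the central–non-central correlation ρ = (q-p²)/(p(1-p)) is zero); note 1 - 2p + p² = (1-p)² > 0, so the Dandelion parameters α = log((p-q)/(1-2p+q)), α₀ = (N-1)·log((1-p)/p) + N·α, β = log(q/(p-q)) - α, Z = (1+exp α)^N + exp(α₀)·(1+exp(α+β))^N are well defined. Then for every l ∈ {0,1,…,N}, the loss probability (1/Z) · C(N,l) · (exp(α l) + exp(α₀ + l(α+β))) equals the binomial probability C(N,l) · p^l · (1-p)^{N-l}. -/

import Mathlib

/-- In the Dandelion model with `q = p²` (zero central–non-central correlation),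
the loss distribution `(1/Z) C(N,l)(exp(α l) + exp(α₀ + l(α+β)))` is exactly the
binomial distribution with parameters `N` and `p`. -/
theorem dandelion_zero_correlation_binomial (N : ℕ) (hN : 1 ≤ N) (p q : ℝ)
    (hp0 : 0 < p) (hp1 : p < 1) (hq : q = p ^ 2)
    (α α₀ β Z : ℝ)
    (hα : α = Real.log ((p - q) / (1 - 2 * p + q)))
    (hα₀ : α₀ = (N - 1 : ℝ) * Real.log ((1 - p) / p) + N * α)
    (hβ : β = Real.log (q / (p - q)) - α)
    (hZ : Z = (1 + Real.exp α) ^ N + Real.exp α₀ * (1 + Real.exp (α + β)) ^ N)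
    (l : ℕ) (hl : l ≤ N) :
    (1 / Z) * (N.choose l : ℝ) *
        (Real.exp (α * l) + Real.exp (α₀ + l * (α + β))) =
      (N.choose l : ℝ) * p ^ l * (1 - p) ^ (N - l) := by
  have h1p : (0:ℝ) < 1 - p := by linarith
  have h1p' : (1:ℝ) - p ≠ 0 := ne_of_gt h1p
  have hppos : (0:ℝ) < p / (1 - p) := div_pos hp0 h1p
  have hαval : α = Real.log (p / (1 - p)) := by
    rw [hα, hq]
    congr 1
    rw [show (1 : ℝ) - 2 * p + p ^ 2 = (1 - p) ^ 2 by ring,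
      show p - p ^ 2 = p * (1 - p) by ring]
    field_simp
  have heα : Real.exp α = p / (1 - p) := by
    rw [hαval, Real.exp_log hppos]
  have heαβ : Real.exp (α + β) = p / (1 - p) := by
    have : α + β = Real.log (q / (p - q)) := by rw [hβ]; ring
    rw [this, hq, show p ^ 2 / (p - p ^ 2) = p / (1 - p) by
      rw [show p - p ^ 2 = p * (1 - p) by ring]; field_simp,
      Real.exp_log hppos]
  have hlog : Real.log ((1 - p) / p) = -α := by
    rw [hαval, ← Real.log_inv]
    congr 1
    field_simp
  have hα₀α : α₀ = α := by
    rw [hα₀, hlog]; ring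
  have heα₀ : Real.exp α₀ = p / (1 - p) := by rw [hα₀α, heα]
  have hZval : Z = (1 / (1 - p)) ^ N * (1 / (1 - p)) := by
    rw [hZ, heα, heαβ, heα₀,
      show (1 : ℝ) + p / (1 - p) = 1 / (1 - p) by field_simp; ring]
    field_simp
    ring
  have hexp1 : Real.exp (α * l) = (p / (1 - p)) ^ l := by
    rw [mul_comm, Real.exp_nat_mul, heα]
  have hexp2 : Real.exp (α₀ + l * (α + β)) = (p / (1 - p)) * (p / (1 - p)) ^ l := by
    rw [Real.exp_add, heα₀, Real.exp_nat_mul, heαβ]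
  have hpow : ((1:ℝ) - p) ^ (N - l) = (1 - p) ^ N / (1 - p) ^ l :=
    pow_sub₀ _ h1p' hl
  rw [hexp1, hexp2, hZval, hpow, div_pow, one_pow, div_pow]
  have hZne : ((1:ℝ) - p) ^ N ≠ 0 := pow_ne_zero _ h1p'
  have hlne : ((1:ℝ) - p) ^ l ≠ 0 := pow_ne_zero _ h1p'
  field_simp
  ring
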